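/- Let M be the minimizer of ‖AM − I‖_F over matrices with pattern 𝒥 and let M' be obtained from M by setting to zero a set D of entries with |M(j,k)| ≤ tol_k := ε/(nnz(m_k)·‖A‖₁) for each (j,k) ∈ D, where nnz(m_k) is the number of nonzero entries in column k. Then for each column k, ‖A m'_k − e_k‖ ≤ ‖A m_k − e_k‖ + ε, where m'_k is column k of M'. -/

import Mathlib

open Finset
open scoped Classical

/-- Adaptive dropping criterion: zeroing entries of magnitude at most
ε/(nnz(m_k)·‖A‖₁) perturbs each column residual norm by at most ε. -/
theorem stmt_13 (n : ℕ) (hn : 0 < n) (A : Matrix (Fin n) (Fin n) ℝ)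
    (J : Set (Fin n × Fin n)) (M : Matrix (Fin n) (Fin n) ℝ)
    (hMpat : ∀ i k, M i k ≠ 0 → (i, k) ∈ J)
    (hMopt : ∀ N : Matrix (Fin n) (Fin n) ℝ, (∀ i k, N i k ≠ 0 → (i, k) ∈ J) →
        ∑ k, ∑ i, ((A * M - 1) i k) ^ 2 ≤ ∑ k, ∑ i, ((A * N - 1) i k) ^ 2)
    (ε : ℝ) (hε : 0 < ε)
    (nnz : Fin n → ℕ)
    (hnnz : ∀ k, nnz k = (Finset.univ.filter (fun j => M j k ≠ 0)).card)
    (normA1 : ℝ)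
    (hA1 : normA1 = Finset.univ.sup' (Finset.univ_nonempty_iff.mpr
        ⟨⟨0, hn⟩⟩) (fun j => ∑ i, |A i j|))
    (D : Set (Fin n × Fin n))
    (hD : ∀ p ∈ D, |M p.1 p.2| ≤ ε / ((nnz p.2 : ℝ) * normA1))
    (M' : Matrix (Fin n) (Fin n) ℝ)
    (hM' : ∀ i k, M' i k = if (i, k) ∈ D then 0 else M i k) :
    ∀ k, Real.sqrt (∑ i,
        (A.mulVec (fun j => M' j k) i - (if i = k then (1:ℝ) else 0)) ^ 2)
      ≤ Real.sqrt (∑ i,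
        (A.mulVec (fun j => M j k) i - (if i = k then (1:ℝ) else 0)) ^ 2) + ε := by
  intro k
  by_cases hc : (0:ℝ) < (nnz k : ℝ) * normA1
  · -- main case
    set d : Fin n → ℝ := fun j => M j k - M' j k with hd
    have hm' : (fun j => M' j k) = (fun j => M j k) - d := by
      funext j; simp [hd]
    have hmv : A.mulVec (fun j => M' j k) =
        A.mulVec (fun j => M j k) - A.mulVec d := by
      rw [hm', Matrix.mulVec_sub]
    -- Euclidean space vectors
    set e : Fin n → ℝ := fun i => if i = k then (1:ℝ) else 0 with he
    set u : EuclideanSpace ℝ (Fin n) := WithLp.toLp 2 (fun i => A.mulVec (fun j => M j k) i - e i) with hu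
    set w : EuclideanSpace ℝ (Fin n) := WithLp.toLp 2 (fun i => A.mulVec d i) with hw
    have hnormu : ‖u‖ = Real.sqrt (∑ i, (A.mulVec (fun j => M j k) i - e i) ^ 2) := by
      rw [EuclideanSpace.norm_eq]
      congr 1; apply Finset.sum_congr rfl; intro i _
      rw [Real.norm_eq_abs, sq_abs]
    have hnormw : ‖w‖ = Real.sqrt (∑ i, (A.mulVec d i) ^ 2) := by
      rw [EuclideanSpace.norm_eq]
      congr 1; apply Finset.sum_congr rfl; intro i _
      rw [Real.norm_eq_abs, sq_abs]
    have hnormuw : ‖u - w‖ = Real.sqrt (∑ i,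
        (A.mulVec (fun j => M' j k) i - e i) ^ 2) := by
      rw [EuclideanSpace.norm_eq]
      congr 1; apply Finset.sum_congr rfl; intro i _
      rw [Real.norm_eq_abs, sq_abs]
      congr 1
      have : (u - w) i = u i - w i := rfl
      rw [this, hmv]
      simp [hu, hw]
      ring
    have htri : ‖u - w‖ ≤ ‖u‖ + ‖w‖ := norm_sub_le u w
    -- bound ‖w‖ ≤ ε
    have hnA : 0 < normA1 := by
      by_contra h
      push_neg at h
      have : (nnz k : ℝ) * normA1 ≤ 0 :=
        mul_nonpos_of_nonneg_of_nonpos (Nat.cast_nonneg _) h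
      linarith
    have hnnzk : 0 < (nnz k : ℝ) := by
      by_contra h
      push_neg at h
      have : (nnz k : ℝ) * normA1 ≤ 0 := mul_nonpos_of_nonpos_of_nonneg h hnA.le
      linarith
    -- l2 ≤ l1
    have h21 : Real.sqrt (∑ i, (A.mulVec d i) ^ 2) ≤ ∑ i, |A.mulVec d i| := by
      have h1 : ∑ i, (A.mulVec d i) ^ 2 ≤ (∑ i, |A.mulVec d i|) ^ 2 := by
        have := Finset.sum_sq_le_sq_sum_of_nonneg
          (s := Finset.univ) (f := fun i => |A.mulVec d i|)
          (fun i _ => abs_nonneg _)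
        simpa [sq_abs] using this
      calc Real.sqrt (∑ i, (A.mulVec d i) ^ 2)
          ≤ Real.sqrt ((∑ i, |A.mulVec d i|) ^ 2) := Real.sqrt_le_sqrt h1
        _ = ∑ i, |A.mulVec d i| := Real.sqrt_sq (Finset.sum_nonneg fun i _ => abs_nonneg _)
    -- l1 bound via column sums
    have hcol : ∀ j, ∑ i, |A i j| ≤ normA1 := by
      intro j
      rw [hA1]
      exact Finset.le_sup' (fun j => ∑ i, |A i j|) (Finset.mem_univ j)
    have hl1 : ∑ i, |A.mulVec d i| ≤ normA1 * ∑ j, |d j| := by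
      calc ∑ i, |A.mulVec d i| ≤ ∑ i, ∑ j, |A i j| * |d j| := by
            apply Finset.sum_le_sum; intro i _
            calc |A.mulVec d i| = |∑ j, A i j * d j| := by
                  simp [Matrix.mulVec, dotProduct]
              _ ≤ ∑ j, |A i j * d j| := Finset.abs_sum_le_sum_abs _ _
              _ = ∑ j, |A i j| * |d j| := by simp [abs_mul]
        _ = ∑ j, (∑ i, |A i j|) * |d j| := by
            rw [Finset.sum_comm]
            simp [Finset.sum_mul]
        _ ≤ ∑ j, normA1 * |d j| := by
            apply Finset.sum_le_sum; intro j _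
            exact mul_le_mul_of_nonneg_right (hcol j) (abs_nonneg _)
        _ = normA1 * ∑ j, |d j| := by rw [Finset.mul_sum]
    -- bound on Σ|d j|
    have hdj : ∀ j, d j ≠ 0 → ((j, k) ∈ D ∧ M j k ≠ 0) := by
      intro j hj
      by_cases h : (j, k) ∈ D
      · refine ⟨h, ?_⟩
        intro hm
        apply hj
        simp [hd, hM', h, hm]
      · exfalso; apply hj; simp [hd, hM', h]
    have hdval : ∀ j, d j ≠ 0 → |d j| ≤ ε / ((nnz k : ℝ) * normA1) := by
      intro j hj
      have h := (hdj j hj).1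
      have := hD (j, k) h
      have hdjeq : d j = M j k := by simp [hd, hM', h]
      rw [hdjeq]
      exact this
    have hsumd : ∑ j, |d j| ≤ (nnz k : ℝ) * (ε / ((nnz k : ℝ) * normA1)) := by
      set S := Finset.univ.filter (fun j => d j ≠ 0) with hS
      have h1 : ∑ j, |d j| = ∑ j ∈ S, |d j| := by
        rw [eq_comm]
        apply Finset.sum_subset (Finset.filter_subset _ _)
        intro j _ hj
        simp [hS] at hj
        simp [hj]
      have h2 : ∑ j ∈ S, |d j| ≤ S.card * (ε / ((nnz k : ℝ) * normA1)) := by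
        have := Finset.sum_le_card_nsmul S (fun j => |d j|) (ε / ((nnz k : ℝ) * normA1))
          (fun j hj => hdval j (by simpa [hS] using hj))
        simpa [nsmul_eq_mul] using this
      have h3 : (S.card : ℝ) ≤ (nnz k : ℝ) := by
        have : S ⊆ Finset.univ.filter (fun j => M j k ≠ 0) := by
          intro j hj
          simp [hS] at hj
          simp [(hdj j hj).2]
        have := Finset.card_le_card this
        rw [hnnz k]
        exact_mod_cast this
      rw [h1]
      calc ∑ j ∈ S, |d j| ≤ S.card * (ε / ((nnz k : ℝ) * normA1)) := h2
        _ ≤ (nnz k : ℝ) * (ε / ((nnz k : ℝ) * normA1)) := by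
            apply mul_le_mul_of_nonneg_right h3
            positivity
    have hwε : ‖w‖ ≤ ε := by
      rw [hnormw]
      calc Real.sqrt (∑ i, (A.mulVec d i) ^ 2) ≤ ∑ i, |A.mulVec d i| := h21
        _ ≤ normA1 * ∑ j, |d j| := hl1
        _ ≤ normA1 * ((nnz k : ℝ) * (ε / ((nnz k : ℝ) * normA1))) :=
            mul_le_mul_of_nonneg_left hsumd hnA.le
        _ = ε := by field_simp
    calc Real.sqrt (∑ i, (A.mulVec (fun j => M' j k) i - (if i = k then (1:ℝ) else 0)) ^ 2)
        = ‖u - w‖ := by rw [hnormuw]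
      _ ≤ ‖u‖ + ‖w‖ := htri
      _ ≤ Real.sqrt (∑ i, (A.mulVec (fun j => M j k) i - (if i = k then (1:ℝ) else 0)) ^ 2) + ε := by
          rw [hnormu]; exact add_le_add le_rfl hwε
  · -- degenerate case: M' column = M column
    have hcol : (fun j => M' j k) = fun j => M j k := by
      funext j
      rw [hM' j k]
      split_ifs with h
      · have h1 := hD (j, k) h
        have hle : ε / ((nnz k : ℝ) * normA1) ≤ 0 :=
          div_nonpos_of_nonneg_of_nonpos hε.le (not_lt.mp hc)
        have : |M j k| ≤ 0 := h1.trans hle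
        have h0 : M j k = 0 := abs_eq_zero.mp (le_antisymm this (abs_nonneg _))
        rw [h0]
      · rfl
    rw [hcol]
    linarith [hε]
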